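/- Let Q be an affine semigroup with face Φ, k a field, I a binomial ideal in k[Q], and Γ a congruence class in Q + ℤΦ under the congruence induced by the localized ideal I[ℤΦ]. If Γ contains two distinct elements v ≠ w with w - v ∈ Q + ℤΦ, then for every u ∈ Γ the monomial t^u maps to 0 in the localization (k[Q]/I)_{p_Φ} of k[Q]/I at the prime ideal p_Φ of the face Φ. -/

import Mathlib

/-- The congruence `u ~_I v` iff `t^u - λ t^v ∈ I` for some nonzero `λ`. -/
def binomialRel {k Q : Type*} [Field k] [AddCommMonoid Q]
    (I : Ideal (AddMonoidAlgebra k Q)) (u v : Q) : Prop :=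
  ∃ lam : k, lam ≠ 0 ∧
    AddMonoidAlgebra.single u 1 - lam • AddMonoidAlgebra.single v 1 ∈ I

/-- A binomial ideal in the monoid algebra `k[Q]`. -/
def IsBinomialIdeal {k Q : Type*} [Field k] [AddCommMonoid Q]
    (I : Ideal (AddMonoidAlgebra k Q)) : Prop :=
  ∃ S : Set (AddMonoidAlgebra k Q), I = Ideal.span S ∧
    ∀ f ∈ S, ∃ (u v : Q) (lam : k),
      f = AddMonoidAlgebra.single u 1 - lam • AddMonoidAlgebra.single v 1

/-- If a congruence class `Γ ⊆ Q + ℤΦ` for the congruence induced by the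
localized ideal `I[ℤΦ]` contains two distinct elements whose difference lies
in `Q + ℤΦ`, then for every `u ∈ Γ` the monomial `t^u` maps to `0` in the
localization `(k[Q]/I)_{p_Φ}`: some `s ∉ p_Φ` kills `t^u` modulo `I[ℤΦ]`. -/
theorem monomial_zero_in_localization {ℓ : ℕ} {k : Type*} [Field k]
    (Q Φ : AddSubmonoid (Fin ℓ → ℤ)) (hQfg : Q.FG) (hΦQ : Φ ≤ Q)
    (hface : ∀ a ∈ Q, ∀ b ∈ Q, a + b ∈ Φ → a ∈ Φ ∧ b ∈ Φ)
    (QΦ : AddSubmonoid (Fin ℓ → ℤ))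
    (hQΦ : QΦ = Q ⊔ AddSubmonoid.closure (Neg.neg '' (Φ : Set (Fin ℓ → ℤ))))
    (hle : Q ≤ QΦ)
    (I : Ideal (AddMonoidAlgebra k Q)) (hI : IsBinomialIdeal I)
    -- the prime ideal `p_Φ` of the face `Φ`
    (pΦ : Ideal (AddMonoidAlgebra k Q))
    (hpΦ : pΦ = Ideal.span {f | ∃ u : Q, (u : Fin ℓ → ℤ) ∉ Φ ∧
      f = AddMonoidAlgebra.single u 1})
    -- the extension `I[ℤΦ]` of `I` to `k[Q + ℤΦ]`
    (Iext : Ideal (AddMonoidAlgebra k QΦ))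
    (hIext : Iext = Ideal.map
      (AddMonoidAlgebra.mapDomainRingHom k (AddSubmonoid.inclusion hle)) I)
    (Γ : Set QΦ) (u₀ : QΦ) (hΓ : Γ = {v | binomialRel Iext u₀ v})
    (hvw : ∃ v ∈ Γ, ∃ w ∈ Γ, v ≠ w ∧ ((w : Fin ℓ → ℤ) - (v : Fin ℓ → ℤ)) ∈ QΦ) :
    ∀ u ∈ Γ, ∃ s : AddMonoidAlgebra k Q, s ∉ pΦ ∧
      (AddMonoidAlgebra.mapDomainRingHom k (AddSubmonoid.inclusion hle)) s *
        AddMonoidAlgebra.single u 1 ∈ Iext := by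
  classical
  intro u huΓ
  obtain ⟨v, hvΓ, w, hwΓ, hvwne, hc⟩ := hvw
  rw [hΓ] at huΓ hvΓ hwΓ
  obtain ⟨a, ha0, hPu⟩ := huΓ
  obtain ⟨b, hb0, hPv⟩ := hvΓ
  obtain ⟨d, hd0, hPw⟩ := hwΓ
  -- decompose `c = q - φ` with `q ∈ Q`, `φ ∈ Φ`
  set c : Fin ℓ → ℤ := (w : Fin ℓ → ℤ) - (v : Fin ℓ → ℤ) with hcdef
  have hcne : c ≠ 0 := sub_ne_zero.mpr (fun h => hvwne (Subtype.ext h.symm))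
  have hcQΦ : c ∈ Q ⊔ AddSubmonoid.closure (Neg.neg '' (Φ : Set (Fin ℓ → ℤ))) := by
    rw [← hQΦ]; exact hc
  rw [AddSubmonoid.mem_sup] at hcQΦ
  obtain ⟨q, hq, z, hz, hqz⟩ := hcQΦ
  have hzneg : ∀ y ∈ AddSubmonoid.closure (Neg.neg '' (Φ : Set (Fin ℓ → ℤ))),
      ∃ φ ∈ Φ, y = -φ := by
    intro y hy
    induction hy using AddSubmonoid.closure_induction with
    | mem x hx => obtain ⟨φ, hφ, rfl⟩ := hx; exact ⟨φ, hφ, rfl⟩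
    | zero => exact ⟨0, Φ.zero_mem, by simp⟩
    | add x y hx hy ihx ihy =>
        obtain ⟨φ₁, hφ₁, rfl⟩ := ihx
        obtain ⟨φ₂, hφ₂, rfl⟩ := ihy
        exact ⟨φ₁ + φ₂, Φ.add_mem hφ₁ hφ₂, by abel⟩
  obtain ⟨φ, hφ, rfl⟩ := hzneg z hz
  have hqc : q = c + φ := by rw [← hqz]; abel
  -- elements
  set φQ : Q := ⟨φ, hΦQ hφ⟩ with hφQ
  set qQ : Q := ⟨q, hq⟩ with hqQ
  set φ' : QΦ := ⟨φ, hle (hΦQ hφ)⟩ with hφ'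
  set q' : QΦ := ⟨q, hle hq⟩ with hq'
  set cQ : QΦ := ⟨c, hc⟩ with hcQ
  have hwv : cQ + v = w := by
    apply Subtype.ext
    show c + (v : Fin ℓ → ℤ) = w
    rw [hcdef]; abel
  have hqsplit : φ' + (cQ + u) = q' + u := by
    apply Subtype.ext
    show φ + (c + (u : Fin ℓ → ℤ)) = q + u
    rw [hqc]; abel
  -- the multiplier s
  refine ⟨(b * a) • AddMonoidAlgebra.single φQ 1 - (d * a) • AddMonoidAlgebra.single qQ 1,
    ?_, ?_⟩
  · -- s ∉ pΦ
    intro hs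
    have hvanish : ∀ f ∈ pΦ, ∀ x : Q, (x : Fin ℓ → ℤ) ∈ Φ → f.coeff x = 0 := by
      rw [hpΦ]
      intro f hf
      induction hf using Submodule.span_induction with
      | mem g hg =>
          obtain ⟨y, hy, rfl⟩ := hg
          intro x hx
          rw [AddMonoidAlgebra.coeff_single, Finsupp.single_apply, if_neg]
          intro h; exact hy (h ▸ hx)
      | zero => intro x _; simp
      | add g₁ g₂ _ _ ih₁ ih₂ =>
          intro x hx
          rw [AddMonoidAlgebra.coeff_add, Finsupp.add_apply, ih₁ x hx, ih₂ x hx, add_zero]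
      | smul r g _ ih =>
          intro x hx
          rw [smul_eq_mul]
          by_contra hne
          have hxsupp : x ∈ (r * g).coeff.support := Finsupp.mem_support_iff.mpr hne
          obtain ⟨y, hy, z, hzs, rfl⟩ := Finset.mem_add.mp
            (AddMonoidAlgebra.support_coeff_mul_subset r g hxsupp)
          have hzΦ : (z : Fin ℓ → ℤ) ∈ Φ := by
            have : (y : Fin ℓ → ℤ) + (z : Fin ℓ → ℤ) ∈ Φ := hx
            exact (hface _ y.2 _ z.2 this).2
          exact Finsupp.mem_support_iff.mp hzs (ih z hzΦ)
    have h0 := hvanish _ hs φQ hφ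
    have hqφ : qQ ≠ φQ := by
      intro h
      apply hcne
      have hqφ' : q = φ := congrArg Subtype.val h
      rw [← hqz, hqφ']
      abel
    rw [AddMonoidAlgebra.coeff_sub, Finsupp.sub_apply, AddMonoidAlgebra.coeff_smul_apply,
      AddMonoidAlgebra.coeff_smul_apply, AddMonoidAlgebra.coeff_single, AddMonoidAlgebra.coeff_single,
      Finsupp.single_apply, Finsupp.single_apply, if_pos rfl, if_neg hqφ] at h0
    simp only [smul_eq_mul, mul_one, mul_zero, sub_zero] at h0
    exact (mul_ne_zero hb0 ha0) h0
  · -- membership in Iext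
    have ksmul : ∀ (lam : k) (x : AddMonoidAlgebra k QΦ), x ∈ Iext → lam • x ∈ Iext := by
      intro lam x hx
      rw [Algebra.smul_def]
      exact Iext.mul_mem_left _ hx
    set Pu := AddMonoidAlgebra.single u₀ (1:k) - a • AddMonoidAlgebra.single u 1 with hPudef
    set Pv := AddMonoidAlgebra.single u₀ (1:k) - b • AddMonoidAlgebra.single v 1 with hPvdef
    set Pw := AddMonoidAlgebra.single u₀ (1:k) - d • AddMonoidAlgebra.single w 1 with hPwdef
    set T : AddMonoidAlgebra k QΦ := AddMonoidAlgebra.single cQ 1 with hT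
    set E : AddMonoidAlgebra k QΦ := b • Pw - T * (d • Pv) + T * (d • Pu) - b • Pu with hE
    have hEmem : E ∈ Iext := by
      apply sub_mem
      apply add_mem
      apply sub_mem
      · exact ksmul b _ hPw
      · exact Iext.mul_mem_left _ (ksmul d _ hPv)
      · exact Iext.mul_mem_left _ (ksmul d _ hPu)
      · exact ksmul b _ hPu
    have key : (AddMonoidAlgebra.mapDomainRingHom k (AddSubmonoid.inclusion hle))
        ((b * a) • AddMonoidAlgebra.single φQ 1 - (d * a) • AddMonoidAlgebra.single qQ 1) *
        AddMonoidAlgebra.single u 1 = AddMonoidAlgebra.single φ' (1:k) * E := by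
      have hsingle : ∀ (x : Q) (r : k),
          (AddMonoidAlgebra.mapDomainRingHom k (AddSubmonoid.inclusion hle))
            (AddMonoidAlgebra.single x r)
            = AddMonoidAlgebra.single (AddSubmonoid.inclusion hle x) r :=
        fun x r => AddMonoidAlgebra.mapDomain_single
      have hinclφ : AddSubmonoid.inclusion hle φQ = φ' := rfl
      have hinclq : AddSubmonoid.inclusion hle qQ = q' := rfl
      have hmap : (AddMonoidAlgebra.mapDomainRingHom k (AddSubmonoid.inclusion hle))
          ((b * a) • AddMonoidAlgebra.single φQ 1 - (d * a) • AddMonoidAlgebra.single qQ 1)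
          = (b * a) • AddMonoidAlgebra.single φ' 1 - (d * a) • AddMonoidAlgebra.single q' 1 := by
        rw [AddMonoidAlgebra.smul_single', AddMonoidAlgebra.smul_single', mul_one, mul_one,
          map_sub, hsingle, hsingle, hinclφ, hinclq,
          AddMonoidAlgebra.smul_single', AddMonoidAlgebra.smul_single', mul_one, mul_one]
      rw [hmap, hE, hPudef, hPvdef, hPwdef, hT]
      simp only [smul_sub, mul_sub, sub_mul, mul_add, add_mul, mul_smul_comm, smul_mul_assoc,
        AddMonoidAlgebra.single_mul_single, one_mul, mul_one, smul_smul]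
      rw [hwv, hqsplit]
      module
    rw [key]
    exact Iext.mul_mem_left _ hEmem
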